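/- Let T be a finite tree and a a vertex of T. The number of connected components of the induced subgraph T \ st(a) equals the sum over c ∈ lk(a) of (deg(c) − 1). -/

import Mathlib

open SimpleGraph

section Aux

variable {V : Type*} {T : SimpleGraph V}

/-- If a path starts `a, c, ...` and `x` is a vertex of its tail adjacent to `a`,
then `x = c` (in a tree). -/
private lemma aux_second [DecidableEq V] (hT : T.IsTree) {a c v x : V} (h : T.Adj a c)
    (q : T.Walk c v) (hp : (q.cons h).IsPath) (hx : x ∈ q.support) (hax : T.Adj a x) :
    x = c := by
  have hx' : x ∈ (q.cons h).support := by simp [hx]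
  have htu : ((q.cons h).takeUntil x hx').IsPath := hp.takeUntil hx'
  have hedge : (Walk.cons hax Walk.nil : T.Walk a x).IsPath := by
    simp [hax.ne]
  have heq : (q.cons h).takeUntil x hx' = Walk.cons hax Walk.nil :=
    (hT.existsUnique_path a x).unique htu hedge
  have hspec := (q.cons h).take_spec hx'
  have hsup := congrArg Walk.support hspec
  rw [Walk.support_append, heq] at hsup
  simp only [Walk.support_cons, Walk.support_nil] at hsup
  have : q.support = x :: ((q.cons h).dropUntil x hx').support.tail := by
    simpa using hsup.symm
  have := congrArg List.head? this
  rw [q.support_eq_cons] at this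
  exact (List.cons.inj (q.support_eq_cons.symm.trans ‹q.support = _›)).1.symm

private lemma aux_reach {s : Set V} {u v : V} (p : T.Walk u v)
    (h : ∀ x ∈ p.support, x ∈ s) (hu : u ∈ s) (hv : v ∈ s) :
    (T.induce s).Reachable ⟨u, hu⟩ ⟨v, hv⟩ := by
  induction p with
  | nil => exact Reachable.refl _
  | @cons a b c hadj q ih =>
    have hb : b ∈ s := h b (by simp)
    exact Reachable.trans (Adj.reachable (by exact hadj))
      (ih (fun x hx => h x (by simp [hx])) hb hv)

end Aux

/-- In a finite tree, the number of connected components of `T \ st(a)` equals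
`∑_{c ∈ lk(a)} (deg c − 1)`. -/
theorem stmt_2 {V : Type*} [Fintype V] [DecidableEq V]
    (T : SimpleGraph V) [DecidableRel T.Adj]
    (hT : T.IsTree) (a : V) :
    Nat.card ((T.induce (insert a (T.neighborSet a))ᶜ).ConnectedComponent) =
      ∑ c ∈ T.neighborFinset a, (T.degree c - 1) := by
  classical
  set S : Set V := insert a (T.neighborSet a) with hS
  set G := T.induce Sᶜ with hGdef
  have hmemS : ∀ {x : V}, x ∈ S ↔ x = a ∨ T.Adj a x := by
    intro x; simp [hS, Set.mem_insert_iff]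
  have haS : a ∈ S := by rw [hmemS]; left; rfl
  -- no vertex adjacent to a neighbor of `a` lies in `S`, except `a` itself
  have claim1 : ∀ {c w : V}, T.Adj a c → T.Adj c w → w ∈ S → w = a := by
    intro c w hac hcw hwS
    rcases hmemS.mp hwS with h | haw
    · exact h
    · exfalso
      have hedge : (Walk.cons haw Walk.nil : T.Walk a w).IsPath := by simp [haw.ne]
      have hpath2 : (Walk.cons hac (Walk.cons hcw Walk.nil) : T.Walk a w).IsPath := by
        simp [hac.ne, hcw.ne, haw.ne]
      have := (hT.existsUnique_path a w).unique hedge hpath2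
      have := congrArg Walk.length this
      simp at this
  -- the type of "attaching edges"
  let K := {p : V × V // T.Adj a p.1 ∧ T.Adj p.1 p.2 ∧ p.2 ∉ S}
  have hmemC : ∀ {w : V}, w ∉ S → w ∈ Sᶜ := fun h => h
  let φ : K → G.ConnectedComponent := fun k =>
    G.connectedComponentMk ⟨k.1.2, hmemC k.2.2.2⟩
  have hbij : Function.Bijective φ := by
    constructor
    · rintro ⟨⟨c, w⟩, hac, hcw, hwS⟩ ⟨⟨c', w'⟩, hac', hcw', hwS'⟩ h
      have hreach : G.Reachable ⟨w, hmemC hwS⟩ ⟨w', hmemC hwS'⟩ :=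
        (SimpleGraph.ConnectedComponent.eq).mp h
      obtain ⟨W⟩ := hreach
      set Wm : T.Walk w w' := W.map (SimpleGraph.Embedding.induce Sᶜ).toHom with hWm
      have hWmsup : ∀ x ∈ Wm.support, x ∉ S := by
        intro x hx
        change x ∈ (W.map (SimpleGraph.Embedding.induce Sᶜ).toHom).support at hx
        rw [Walk.support_map] at hx
        obtain ⟨y, _, rfl⟩ := List.mem_map.mp hx
        exact y.2
      set q : T.Walk w w' := Wm.bypass with hq
      have hqp : q.IsPath := Wm.bypass_isPath
      have hqsup : ∀ x ∈ q.support, x ∉ S := fun x hx =>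
        hWmsup x (Wm.support_bypass_subset hx)
      have hcS : c ∈ S := hmemS.mpr (Or.inr hac)
      have hc'S : c' ∈ S := hmemS.mpr (Or.inr hac')
      have hP1 : (Walk.cons hac (Walk.cons hcw q) : T.Walk a w').IsPath := by
        rw [Walk.cons_isPath_iff, Walk.cons_isPath_iff]
        refine ⟨⟨hqp, fun h => hqsup c h hcS⟩, ?_⟩
        simp only [Walk.support_cons, List.mem_cons]
        rintro (rfl | h)
        · exact hac.ne rfl
        · exact hqsup a h haS
      have hP2 : (Walk.cons hac' (Walk.cons hcw' Walk.nil) : T.Walk a w').IsPath := by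
        have haw' : a ≠ w' := fun h => hwS' (h ▸ haS)
        simp [hac'.ne, hcw'.ne, haw']
      have heq := (hT.existsUnique_path a w').unique hP1 hP2
      have hsup := congrArg Walk.support heq
      simp only [Walk.support_cons, Walk.support_nil] at hsup
      obtain ⟨rfl, hsup2⟩ : c = c' ∧ q.support = [w'] := by
        simpa using hsup
      have hw : w = w' := by
        have := congrArg List.head? hsup2
        rw [q.support_eq_cons] at this
        exact (List.cons.inj (q.support_eq_cons.symm.trans hsup2)).1
      subst hw
      rfl
    · intro comp
      induction comp using ConnectedComponent.ind with
      | _ v =>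
        obtain ⟨x, hxC⟩ := v
        have hxS : x ∉ S := hxC
        obtain ⟨p, hp, -⟩ := hT.existsUnique_path a x
        cases p with
        | nil => exact absurd haS (by simpa using hxS)
        | @cons _ c _ hac q =>
          cases q with
          | nil =>
            exact absurd (hmemS.mpr (Or.inr hac)) hxS
          | @cons _ w _ hcw r =>
            -- r : T.Walk w x ; show all of r.support avoids S
            have hq2 : (Walk.cons hcw r).IsPath := hp.of_cons
            have hrp : r.IsPath := hq2.of_cons
            have hcr : c ∉ r.support := by
              have := (Walk.cons_isPath_iff _ _).mp hq2
              exact this.2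
            have har : a ∉ (Walk.cons hcw r).support := by
              have := (Walk.cons_isPath_iff _ _).mp hp
              exact this.2
            have hrsup : ∀ y ∈ r.support, y ∉ S := by
              intro y hy hyS
              rcases hmemS.mp hyS with rfl | hay
              · exact har (by simp [hy])
              · have : y = c := aux_second hT hac (Walk.cons hcw r) hp (by simp [hy]) hay
                exact hcr (this ▸ hy)
            have hwS : w ∉ S := hrsup w r.start_mem_support
            refine ⟨⟨(c, w), hac, hcw, hwS⟩, ?_⟩
            show G.connectedComponentMk ⟨w, hmemC hwS⟩ = G.connectedComponentMk ⟨x, hxC⟩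
            exact SimpleGraph.ConnectedComponent.eq.mpr
              (aux_reach r (fun y hy => hmemC (hrsup y hy)) (hmemC hwS) hxC)
  have hcard1 : Nat.card K = Nat.card G.ConnectedComponent :=
    Nat.card_eq_of_bijective φ hbij
  rw [← hcard1]
  -- now count K
  let e : K ≃ Σ c : T.neighborFinset a, {w : V // T.Adj c w ∧ w ∉ S} :=
    { toFun := fun k => ⟨⟨k.1.1, by simp [mem_neighborFinset, k.2.1]⟩, k.1.2, k.2.2.1, k.2.2.2⟩
      invFun := fun x => ⟨(x.1.1, x.2.1),
        by have := x.1.2; rwa [mem_neighborFinset] at this, x.2.2.1, x.2.2.2⟩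
      left_inv := fun k => rfl
      right_inv := fun x => rfl }
  rw [Nat.card_congr e, Nat.card_eq_fintype_card, Fintype.card_sigma]
  rw [← Finset.sum_coe_sort (T.neighborFinset a) (fun c => T.degree c - 1)]
  refine Finset.sum_congr rfl ?_
  intro c _
  have hac : T.Adj a ↑c := by
    have := c.2; rwa [mem_neighborFinset] at this
  have hfil : Finset.univ.filter (fun w => T.Adj ↑c w ∧ w ∉ S) =
      T.neighborFinset ↑c \ {a} := by
    ext w
    simp only [Finset.mem_filter, Finset.mem_univ, true_and, Finset.mem_sdiff,
      mem_neighborFinset, Finset.mem_singleton]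
    constructor
    · rintro ⟨hcw, hwS⟩
      exact ⟨hcw, fun h => hwS (h ▸ haS)⟩
    · rintro ⟨hcw, hwa⟩
      exact ⟨hcw, fun hwS => hwa (claim1 hac hcw hwS)⟩
  rw [Fintype.card_subtype, hfil, Finset.card_sdiff_of_subset (by
    simp [Finset.singleton_subset_iff, mem_neighborFinset, hac.symm])]
  rw [Finset.card_singleton, SimpleGraph.card_neighborFinset_eq_degree]
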